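/- Let ν be a measure on (0,∞) with ∫₀^∞ (x ∧ 1) ν(dx) < ∞, let b ≥ 0, and define φ(u) = b u + ∫₀^∞ (1 - e^{-u x}) ν(dx) for u > 0. Suppose 0 < α < α' < 1 and there is a constant c > 0 with φ(u) ≤ c u^{α'} for all u ∈ (0,1). Then ∫_{(1,∞)} x^α ν(dx) < ∞. -/

import Mathlib

open MeasureTheory Set Real

theorem levy_moment_finite_of_bernstein_bound (ν : Measure ℝ) (b α α' c : ℝ) (hb : 0 ≤ b)
    (hν : ∫⁻ x in Set.Ioi (0:ℝ), ENNReal.ofReal (min x 1) ∂ν < ⊤)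
    (hα : 0 < α) (hαα' : α < α') (hα' : α' < 1) (hc : 0 < c)
    (φ : ℝ → ℝ)
    (hφ : ∀ u > 0, φ u = b * u + ∫ x in Set.Ioi (0:ℝ), (1 - Real.exp (-u * x)) ∂ν)
    (hbound : ∀ u ∈ Set.Ioo (0:ℝ) 1, φ u ≤ c * u ^ α') :
    ∫⁻ x in Set.Ioi (1:ℝ), ENNReal.ofReal (x ^ α) ∂ν < ⊤ := by
  have hd : (0:ℝ) < 1 - Real.exp (-(1/2)) := by
    have : Real.exp (-(1/2)) < 1 := by
      rw [Real.exp_lt_one_iff]; norm_num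
    linarith
  set d : ℝ := 1 - Real.exp (-(1/2)) with hd_def
  -- Step 1: for u ∈ (0,1), the lintegral of 1 - e^{-ux} over (0,∞) is ≤ c u^{α'}
  have key : ∀ u ∈ Set.Ioo (0:ℝ) 1,
      ∫⁻ x in Set.Ioi (0:ℝ), ENNReal.ofReal (1 - Real.exp (-u * x)) ∂ν
        ≤ ENNReal.ofReal (c * u ^ α') := by
    intro u hu
    have hu0 := hu.1
    have hu1 := hu.2
    have hb1 : ∀ x ∈ Set.Ioi (0:ℝ), 1 - Real.exp (-u * x) ≤ min x 1 := by
      intro x hx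
      have hx0 : 0 < x := hx
      refine le_min ?_ ?_
      · have h1 : (-(u*x)) + 1 ≤ Real.exp (-(u*x)) := Real.add_one_le_exp _
        have h2 : u * x ≤ x := by nlinarith
        have : -u * x = -(u*x) := by ring
        rw [this]; linarith
      · have := Real.exp_pos (-u * x)
        linarith
    have hfin : ∫⁻ x in Set.Ioi (0:ℝ), ENNReal.ofReal (1 - Real.exp (-u * x)) ∂ν < ⊤ := by
      refine lt_of_le_of_lt ?_ hν
      refine setLIntegral_mono (by fun_prop) ?_
      intro x hx
      exact ENNReal.ofReal_le_ofReal (hb1 x hx)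
    have hnn : (0:ℝ → ℝ) ≤ᵐ[ν.restrict (Set.Ioi 0)] fun x => 1 - Real.exp (-u * x) := by
      rw [Filter.EventuallyLE, ae_restrict_iff' measurableSet_Ioi]
      refine Filter.Eventually.of_forall fun x hx => ?_
      have hx0 : (0:ℝ) < x := hx
      have : Real.exp (-u * x) < 1 := by
        rw [Real.exp_lt_one_iff]; nlinarith
      simp only [Pi.zero_apply]; linarith
    have hmeas : AEMeasurable (fun x => 1 - Real.exp (-u * x)) (ν.restrict (Set.Ioi 0)) := by
      fun_prop
    have heq := integral_eq_lintegral_of_nonneg_ae hnn hmeas.aestronglyMeasurable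
    have hint : ∫ x in Set.Ioi (0:ℝ), (1 - Real.exp (-u * x)) ∂ν ≤ c * u ^ α' := by
      have h1 := hbound u hu
      rw [hφ u hu0] at h1
      nlinarith [mul_nonneg hb hu0.le]
    calc ∫⁻ x in Set.Ioi (0:ℝ), ENNReal.ofReal (1 - Real.exp (-u * x)) ∂ν
        = ENNReal.ofReal (∫ x in Set.Ioi (0:ℝ), (1 - Real.exp (-u * x)) ∂ν) := by
          rw [heq, ENNReal.ofReal_toReal hfin.ne]
      _ ≤ ENNReal.ofReal (c * u ^ α') := ENNReal.ofReal_le_ofReal hint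
  -- Step 2: tail bound
  have tail : ∀ n : ℕ, ENNReal.ofReal d * ν (Set.Ioi ((2:ℝ)^n))
      ≤ ENNReal.ofReal (c * (((2:ℝ) ^ (n+1))⁻¹) ^ α') := by
    intro n
    set u : ℝ := ((2:ℝ) ^ (n+1))⁻¹ with hu_def
    have h2pos : (0:ℝ) < (2:ℝ) ^ (n+1) := by positivity
    have h2gt1 : (1:ℝ) < (2:ℝ) ^ (n+1) := one_lt_pow₀ (by norm_num) (Nat.succ_ne_zero n)
    have hu : u ∈ Set.Ioo (0:ℝ) 1 := ⟨by positivity, by rw [hu_def]; exact inv_lt_one_of_one_lt₀ h2gt1⟩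
    have hlow : ∀ x ∈ Set.Ioi ((2:ℝ)^n), ENNReal.ofReal d ≤ ENNReal.ofReal (1 - Real.exp (-u * x)) := by
      intro x hx
      refine ENNReal.ofReal_le_ofReal ?_
      have hx' : (2:ℝ)^n < x := hx
      have hux : (1/2 : ℝ) ≤ u * x := by
        rw [hu_def, inv_mul_eq_div, le_div_iff₀ h2pos]
        have h2n : (2:ℝ)^(n+1) = 2 * (2:ℝ)^n := by ring
        nlinarith [pow_pos (show (0:ℝ) < 2 by norm_num) n]
      have : Real.exp (-u * x) ≤ Real.exp (-(1/2)) := by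
        apply Real.exp_le_exp.mpr; linarith
      rw [hd_def]; linarith
    calc ENNReal.ofReal d * ν (Set.Ioi ((2:ℝ)^n))
        = ∫⁻ _ in Set.Ioi ((2:ℝ)^n), ENNReal.ofReal d ∂ν := by
          rw [setLIntegral_const]
      _ ≤ ∫⁻ x in Set.Ioi ((2:ℝ)^n), ENNReal.ofReal (1 - Real.exp (-u * x)) ∂ν :=
          setLIntegral_mono (by fun_prop) hlow
      _ ≤ ∫⁻ x in Set.Ioi (0:ℝ), ENNReal.ofReal (1 - Real.exp (-u * x)) ∂ν :=
          lintegral_mono_set (Set.Ioi_subset_Ioi (by positivity))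
      _ ≤ ENNReal.ofReal (c * u ^ α') := key u hu
  -- Step 3: dyadic decomposition
  classical
  have hcover : Set.Ioi (1:ℝ) ⊆ ⋃ n : ℕ, Set.Ioc ((2:ℝ)^n) ((2:ℝ)^(n+1)) := by
    intro x hx
    have hx1 : (1:ℝ) < x := hx
    obtain ⟨m, hm⟩ := pow_unbounded_of_one_lt x (show (1:ℝ) < 2 by norm_num)
    have hP : ∃ n : ℕ, x ≤ (2:ℝ)^(n+1) :=
      ⟨m, le_of_lt (lt_of_lt_of_le hm (pow_le_pow_right₀ (by norm_num) (Nat.le_succ m)))⟩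
    refine Set.mem_iUnion.mpr ⟨Nat.find hP, ?_, Nat.find_spec hP⟩
    rcases Nat.eq_zero_or_pos (Nat.find hP) with h0 | hpos
    · rw [h0]; simpa using hx1
    · obtain ⟨k, hk⟩ : ∃ k, Nat.find hP = k + 1 := ⟨Nat.find hP - 1, by omega⟩
      have hmin := Nat.find_min hP (show k < Nat.find hP by omega)
      push_neg at hmin
      rw [hk]; exact hmin
  set ρ : ℝ := (2:ℝ) ^ (α - α') with hρ_def
  have hρ0 : 0 < ρ := Real.rpow_pos_of_pos two_pos _
  have hρ1 : ρ < 1 :=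
    Real.rpow_lt_one_of_one_lt_of_neg (by norm_num) (by linarith)
  have hD0 : ENNReal.ofReal d ≠ 0 := (ENNReal.ofReal_pos.mpr hd).ne'
  have term : ∀ n : ℕ,
      ∫⁻ x in Set.Ioc ((2:ℝ)^n) ((2:ℝ)^(n+1)), ENNReal.ofReal (x ^ α) ∂ν
        ≤ (ENNReal.ofReal d)⁻¹ * ENNReal.ofReal c * (ENNReal.ofReal ρ)^(n+1) := by
    intro n
    have h2pos : (0:ℝ) < (2:ℝ) ^ (n+1) := by positivity
    have hν1 : ν (Set.Ioc ((2:ℝ)^n) ((2:ℝ)^(n+1))) ≤ ν (Set.Ioi ((2:ℝ)^n)) :=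
      measure_mono Set.Ioc_subset_Ioi_self
    have hν2 : ν (Set.Ioi ((2:ℝ)^n))
        ≤ (ENNReal.ofReal d)⁻¹ * ENNReal.ofReal (c * (((2:ℝ) ^ (n+1))⁻¹) ^ α') := by
      calc ν (Set.Ioi ((2:ℝ)^n))
          = (ENNReal.ofReal d)⁻¹ * (ENNReal.ofReal d * ν (Set.Ioi ((2:ℝ)^n))) := by
            rw [← mul_assoc, ENNReal.inv_mul_cancel hD0 ENNReal.ofReal_ne_top, one_mul]
        _ ≤ _ := mul_le_mul_right (tail n) _
    have hid : ((2:ℝ)^(n+1)) ^ α * (c * (((2:ℝ) ^ (n+1))⁻¹) ^ α') = c * ρ^(n+1) := by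
      have h2 : (0:ℝ) < 2 := two_pos
      rw [hρ_def, ← Real.rpow_natCast ((2:ℝ) ^ (α - α')) (n+1),
        ← Real.rpow_natCast (2:ℝ) (n+1),
        ← Real.rpow_neg_one ((2:ℝ) ^ (((n:ℕ)+1:ℕ):ℝ)),
        ← Real.rpow_mul h2.le, ← Real.rpow_mul h2.le, ← Real.rpow_mul h2.le,
        ← Real.rpow_mul h2.le, mul_left_comm, ← Real.rpow_add h2]
      congr 1
      ring
    calc ∫⁻ x in Set.Ioc ((2:ℝ)^n) ((2:ℝ)^(n+1)), ENNReal.ofReal (x ^ α) ∂ν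
        ≤ ∫⁻ _ in Set.Ioc ((2:ℝ)^n) ((2:ℝ)^(n+1)),
            ENNReal.ofReal (((2:ℝ)^(n+1)) ^ α) ∂ν := by
          refine setLIntegral_mono (by fun_prop) fun x hx => ?_
          exact ENNReal.ofReal_le_ofReal
            (Real.rpow_le_rpow (le_of_lt (lt_trans (by positivity) hx.1)) hx.2 hα.le)
      _ = ENNReal.ofReal (((2:ℝ)^(n+1)) ^ α) * ν (Set.Ioc ((2:ℝ)^n) ((2:ℝ)^(n+1))) :=
          setLIntegral_const _ _
      _ ≤ ENNReal.ofReal (((2:ℝ)^(n+1)) ^ α)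
            * ((ENNReal.ofReal d)⁻¹ * ENNReal.ofReal (c * (((2:ℝ) ^ (n+1))⁻¹) ^ α')) :=
          mul_le_mul_right (hν1.trans hν2) _
      _ = (ENNReal.ofReal d)⁻¹
            * (ENNReal.ofReal (((2:ℝ)^(n+1)) ^ α)
                * ENNReal.ofReal (c * (((2:ℝ) ^ (n+1))⁻¹) ^ α')) := by ring
      _ = (ENNReal.ofReal d)⁻¹
            * ENNReal.ofReal (((2:ℝ)^(n+1)) ^ α * (c * (((2:ℝ) ^ (n+1))⁻¹) ^ α')) := by
          rw [← ENNReal.ofReal_mul (by positivity)]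
      _ = (ENNReal.ofReal d)⁻¹ * ENNReal.ofReal c * (ENNReal.ofReal ρ)^(n+1) := by
          rw [hid, ENNReal.ofReal_mul hc.le, ENNReal.ofReal_pow hρ0.le, mul_assoc]
  have hr1 : ENNReal.ofReal ρ < 1 := by
    rw [← ENNReal.ofReal_one]; exact ENNReal.ofReal_lt_ofReal_iff_of_nonneg hρ0.le |>.mpr hρ1
  calc ∫⁻ x in Set.Ioi (1:ℝ), ENNReal.ofReal (x ^ α) ∂ν
      ≤ ∫⁻ x in ⋃ n : ℕ, Set.Ioc ((2:ℝ)^n) ((2:ℝ)^(n+1)), ENNReal.ofReal (x ^ α) ∂ν :=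
        lintegral_mono_set hcover
    _ ≤ ∑' n : ℕ, ∫⁻ x in Set.Ioc ((2:ℝ)^n) ((2:ℝ)^(n+1)), ENNReal.ofReal (x ^ α) ∂ν :=
        lintegral_iUnion_le _ _
    _ ≤ ∑' n : ℕ, (ENNReal.ofReal d)⁻¹ * ENNReal.ofReal c * (ENNReal.ofReal ρ)^(n+1) :=
        ENNReal.tsum_le_tsum term
    _ = (ENNReal.ofReal d)⁻¹ * ENNReal.ofReal c * ∑' n : ℕ, (ENNReal.ofReal ρ)^(n+1) :=
        ENNReal.tsum_mul_left
    _ ≤ (ENNReal.ofReal d)⁻¹ * ENNReal.ofReal c * ∑' n : ℕ, (ENNReal.ofReal ρ)^n := by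
        refine mul_le_mul_right (ENNReal.tsum_le_tsum fun n => ?_) _
        exact pow_le_pow_of_le_one zero_le hr1.le (Nat.le_succ n)
    _ < ⊤ := by
        rw [ENNReal.tsum_geometric]
        refine ENNReal.mul_lt_top (ENNReal.mul_lt_top ?_ ?_) ?_
        · exact ENNReal.inv_lt_top.mpr (ENNReal.ofReal_pos.mpr hd)
        · exact ENNReal.ofReal_lt_top
        · exact ENNReal.inv_lt_top.mpr (tsub_pos_of_lt hr1)
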